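/- Let J, g, B, M, γ_x, γ_y, γ_z be real numbers with J > 0, g ≠ 0, B ≠ 0, and suppose (M − γ_x + γ_z)² > 16 g² B². Set Θ = √((M − γ_x + γ_z)² − 16 g² B²) and define J_x(t) = (J/(2Θ)) · e^{−(M + γ_x + 2γ_y + γ_z + Θ)t/4} · (M − γ_x + γ_z + Θ − e^{tΘ/2}(M − γ_x + γ_z − Θ)). Then there exists a differentiable function J_z : ℝ → ℝ with J_z(0) = 0 such that J_x(0) = J and, for all t, J_x'(t) = g B · J_z(t) − (1/2)(M + γ_y + γ_z) J_x(t) and J_z'(t) = −g B · J_x(t) − (1/2)(γ_x + γ_y) J_z(t). -/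

import Mathlib

/-- **Appendix A exact solution for the unconditional mean spin ⟨Ĵ_x(t)⟩.**
With `Θ = √((M − γ_x + γ_z)² − 16g²B²)`, the explicit function `J_x` solves the
coupled linear system `J_x' = gB J_z − ½(M + γ_y + γ_z)J_x`,
`J_z' = −gB J_x − ½(γ_x + γ_y)J_z` with `J_x(0) = J`, `J_z(0) = 0`. -/
theorem unconditional_Jx_exact_solution
    (J g B M γx γy γz : ℝ) (hJ : 0 < J) (hg : g ≠ 0) (hB : B ≠ 0)
    (hdisc : (M - γx + γz) ^ 2 > 16 * g ^ 2 * B ^ 2)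
    (Θ : ℝ) (hΘ : Θ = Real.sqrt ((M - γx + γz) ^ 2 - 16 * g ^ 2 * B ^ 2))
    (Jx : ℝ → ℝ)
    (hJx : ∀ t : ℝ, Jx t = (J / (2 * Θ)) *
      Real.exp (-(M + γx + 2 * γy + γz + Θ) * t / 4) *
        (M - γx + γz + Θ - Real.exp (t * Θ / 2) * (M - γx + γz - Θ))) :
    ∃ Jz : ℝ → ℝ, Differentiable ℝ Jz ∧ Jz 0 = 0 ∧ Jx 0 = J ∧
      ∀ t : ℝ,
        HasDerivAt Jx (g * B * Jz t - (1 / 2) * (M + γy + γz) * Jx t) t ∧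
        HasDerivAt Jz (-(g * B) * Jx t - (1 / 2) * (γx + γy) * Jz t) t := by
  have hΘpos : 0 < Θ := by
    rw [hΘ]; exact Real.sqrt_pos.mpr (by linarith)
  have hΘne : Θ ≠ 0 := ne_of_gt hΘpos
  have hΘsq : Θ ^ 2 = (M - γx + γz) ^ 2 - 16 * g ^ 2 * B ^ 2 := by
    rw [hΘ, Real.sq_sqrt (by linarith)]
  have hJxfun : Jx = fun t => (J / (2 * Θ)) *
      Real.exp (-(M + γx + 2 * γy + γz + Θ) * t / 4) *
        (M - γx + γz + Θ - Real.exp (t * Θ / 2) * (M - γx + γz - Θ)) := funext hJx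
  subst hJxfun
  refine ⟨fun t => (2 * J * g * B / Θ) *
      Real.exp (-(M + γx + 2 * γy + γz + Θ) * t / 4) * (1 - Real.exp (t * Θ / 2)), ?_, ?_, ?_, ?_⟩
  · fun_prop
  · simp
  · simp only [mul_zero, zero_mul, Real.exp_zero, mul_one, zero_div, neg_zero]
    field_simp
    ring
  · intro t
    have h1 : HasDerivAt (fun t : ℝ => Real.exp (-(M + γx + 2 * γy + γz + Θ) * t / 4))
        (Real.exp (-(M + γx + 2 * γy + γz + Θ) * t / 4) *
          (-(M + γx + 2 * γy + γz + Θ) / 4)) t := by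
      have : HasDerivAt (fun t : ℝ => -(M + γx + 2 * γy + γz + Θ) * t / 4)
          (-(M + γx + 2 * γy + γz + Θ) / 4) t := by
        simpa using ((hasDerivAt_id t).const_mul (-(M + γx + 2 * γy + γz + Θ))).div_const 4
      exact this.exp
    have h2 : HasDerivAt (fun t : ℝ => Real.exp (t * Θ / 2))
        (Real.exp (t * Θ / 2) * (Θ / 2)) t := by
      have : HasDerivAt (fun t : ℝ => t * Θ / 2) (Θ / 2) t := by
        simpa using ((hasDerivAt_id t).mul_const Θ).div_const 2
      exact this.exp
    have key1 : ∀ e1 e2 : ℝ,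
        (J / (2 * Θ)) * (e1 * (-(M + γx + 2 * γy + γz + Θ) / 4)) *
            (M - γx + γz + Θ - e2 * (M - γx + γz - Θ)) +
          (J / (2 * Θ)) * e1 * (-(e2 * (Θ / 2) * (M - γx + γz - Θ)))
        = g * B * ((2 * J * g * B / Θ) * e1 * (1 - e2)) -
            (1 / 2) * (M + γy + γz) *
              ((J / (2 * Θ)) * e1 * (M - γx + γz + Θ - e2 * (M - γx + γz - Θ))) := by
      intro e1 e2
      have h8 : (8:ℝ) * Θ ≠ 0 := by positivity
      linear_combination (J * e1 * (e2 - 1) / (8 * Θ)) * hΘsq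
    have key2 : ∀ e1 e2 : ℝ,
        (2 * J * g * B / Θ) * (e1 * (-(M + γx + 2 * γy + γz + Θ) / 4)) * (1 - e2) +
          (2 * J * g * B / Θ) * e1 * (-(e2 * (Θ / 2)))
        = -(g * B) * ((J / (2 * Θ)) * e1 * (M - γx + γz + Θ - e2 * (M - γx + γz - Θ))) -
            (1 / 2) * (γx + γy) * ((2 * J * g * B / Θ) * e1 * (1 - e2)) := by
      intro e1 e2
      field_simp
      ring
    constructor
    · rw [← key1 (Real.exp (-(M + γx + 2 * γy + γz + Θ) * t / 4)) (Real.exp (t * Θ / 2))]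
      exact (h1.const_mul (J / (2 * Θ))).mul
        (((h2.mul_const (M - γx + γz - Θ))).const_sub (M - γx + γz + Θ))
    · rw [← key2 (Real.exp (-(M + γx + 2 * γy + γz + Θ) * t / 4)) (Real.exp (t * Θ / 2))]
      exact (h1.const_mul (2 * J * g * B / Θ)).mul (h2.const_sub 1)
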